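/- Let d ≥ 1, and for each j ∈ {1,…,d} let k_j : (0,∞) → ℝ be continuously differentiable with k_j' monotone on some right-neighborhood of 0, such that lim_{t→0+} k_j(t)/(t^{H_j − 1/2} ℓ_j(1/t)) = 1 for some H_j ∈ (0,1) and some slowly varying function ℓ_j : (0,∞) → (0,∞). Set K(t) = diag(k_1(t), …, k_d(t)) and H_min = min_j H_j. Then for every η > 2 − 2 H_min one has ∫_0^1 ‖K'(t)‖² t^η dt < ∞, where K'(t) = diag(k_1'(t), …, k_d'(t)) and ‖·‖ denotes the matrix operator norm. -/

import Mathlib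

open MeasureTheory Filter Set Matrix intervalIntegral

/-- A measurable function `ℓ`, positive on `(0,∞)`, is slowly varying at infinity if
`ℓ(λ t)/ℓ(t) → 1` as `t → ∞`, for every `λ > 0`. -/
def SlowlyVarying (ℓ : ℝ → ℝ) : Prop :=
  Measurable ℓ ∧ ∀ lam : ℝ, 0 < lam →
    Filter.Tendsto (fun t => ℓ (lam * t) / ℓ t) Filter.atTop (nhds 1)

/-- The operator (spectral) norm `‖A‖ = sup_{|x| = 1} |A x|` of a real matrix, with
respect to the Euclidean norms. -/
noncomputable def opNorm {n m : ℕ} (A : Matrix (Fin n) (Fin m) ℝ) : ℝ :=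
  sSup {r : ℝ | ∃ x : Fin m → ℝ, (∑ i, x i ^ 2) = 1 ∧
    r = Real.sqrt (∑ i, (A.mulVec x i) ^ 2)}

lemma opNorm_diagonal {n : ℕ} (v : Fin (n + 1) → ℝ) :
    opNorm (Matrix.diagonal v) = Finset.univ.sup' Finset.univ_nonempty (fun j => |v j|) := by
  set M := Finset.univ.sup' Finset.univ_nonempty (fun j => |v j|) with hM
  have hM0 : 0 ≤ M := le_trans (abs_nonneg (v 0)) (Finset.le_sup' (fun j => |v j|) (Finset.mem_univ (0 : Fin (n+1))))
  have hub : ∀ r ∈ {r : ℝ | ∃ x : Fin (n+1) → ℝ, (∑ i, x i ^ 2) = 1 ∧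
      r = Real.sqrt (∑ i, ((Matrix.diagonal v).mulVec x i) ^ 2)}, r ≤ M := by
    rintro r ⟨x, hx, rfl⟩
    have h1 : (∑ i, ((Matrix.diagonal v).mulVec x i) ^ 2) ≤ M ^ 2 := by
      calc (∑ i, ((Matrix.diagonal v).mulVec x i) ^ 2)
          = ∑ i, (v i)^2 * (x i)^2 := by
            refine Finset.sum_congr rfl fun i _ => ?_
            rw [Matrix.mulVec_diagonal]; ring
        _ ≤ ∑ i, M^2 * (x i)^2 := by
            refine Finset.sum_le_sum fun i _ => ?_
            have : |v i| ≤ M := Finset.le_sup' (fun j => |v j|) (Finset.mem_univ i)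
            have := mul_le_mul_of_nonneg_right
              (pow_le_pow_left₀ (abs_nonneg _) this 2) (sq_nonneg (x i))
            simpa [sq_abs] using this
        _ = M ^ 2 := by rw [← Finset.mul_sum, hx, mul_one]
    calc Real.sqrt (∑ i, ((Matrix.diagonal v).mulVec x i) ^ 2) ≤ Real.sqrt (M^2) :=
          Real.sqrt_le_sqrt h1
      _ = M := by rw [Real.sqrt_sq hM0]
  refine le_antisymm (Real.sSup_le hub hM0) ?_
  obtain ⟨j, -, hj⟩ := Finset.exists_mem_eq_sup' (Finset.univ_nonempty (α := Fin (n+1)))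
    (fun j => |v j|)
  refine le_csSup ⟨M, hub⟩ ?_
  refine ⟨Pi.single j 1, ?_, ?_⟩
  · rw [Finset.sum_eq_single j]
    · simp
    · intro i _ hi; rw [Pi.single_eq_of_ne hi]; ring
    · simp
  · rw [hM, hj]
    rw [Finset.sum_eq_single j]
    · rw [Matrix.mulVec_diagonal, Pi.single_eq_same, mul_one, Real.sqrt_sq_eq_abs]
    · intro i _ hi; rw [Matrix.mulVec_diagonal, Pi.single_eq_of_ne hi]; ring
    · simp


lemma boundA (k : ℝ → ℝ) (Hj : ℝ) (ℓ : ℝ → ℝ) (δ : ℝ) (hδ : 0 < δ)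
    (hk : ContDiffOn ℝ 1 k (Ioi 0))
    (hℓpos : ∀ x : ℝ, 0 < x → 0 < ℓ x) (hℓsv : SlowlyVarying ℓ)
    (hreg : Tendsto (fun t => k t / (t ^ (Hj - 1 / 2) * ℓ (1 / t)))
      (nhdsWithin 0 (Ioi 0)) (nhds 1))
    (ε : ℝ) (hε : 0 < ε) :
    ∃ T, 0 < T ∧ T ≤ 1 ∧ 2 * T ≤ δ ∧ ∃ A, 0 ≤ A ∧ ∀ t ∈ Ioc (0:ℝ) T,
      0 < k t ∧ k t ≤ A * t ^ (Hj - 1 / 2 - ε) := by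
  -- step 1 : ratio bounds near 0
  obtain ⟨t₁, ht₁, hball⟩ : ∃ t₁ > 0, ∀ t, 0 < t → t < t₁ →
      |k t / (t ^ (Hj - 1 / 2) * ℓ (1 / t)) - 1| < 1/2 := by
    have h2 : {t : ℝ | k t / (t ^ (Hj - 1 / 2) * ℓ (1 / t)) ∈ Metric.ball (1:ℝ) (1/2)}
        ∈ nhdsWithin (0:ℝ) (Ioi 0) :=
      hreg (Metric.ball_mem_nhds 1 (by norm_num))
    rw [Metric.mem_nhdsWithin_iff] at h2
    obtain ⟨r, hr, hsub⟩ := h2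
    refine ⟨r, hr, fun t ht htr => ?_⟩
    have : t ∈ Metric.ball (0:ℝ) r ∩ Ioi 0 := by
      constructor
      · simp [Real.dist_eq, abs_of_pos ht, htr]
      · exact ht
    have := hsub this
    simpa [Real.dist_eq] using this
  have hratio : ∀ t, 0 < t → t < t₁ →
      0 < k t ∧ ℓ (1/t) ≤ 2 * k t / t ^ (Hj - 1 / 2) ∧
      k t ≤ 3/2 * (t ^ (Hj - 1 / 2) * ℓ (1/t)) := by
    intro t ht htt
    have hD : 0 < t ^ (Hj - 1 / 2) * ℓ (1/t) :=
      mul_pos (Real.rpow_pos_of_pos ht _) (hℓpos _ (by positivity))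
    have h := hball t ht htt
    rw [abs_lt] at h
    have h1 : 1/2 < k t / (t ^ (Hj - 1 / 2) * ℓ (1/t)) := by linarith [h.1]
    have h2 : k t / (t ^ (Hj - 1 / 2) * ℓ (1/t)) < 3/2 := by linarith [h.2]
    rw [lt_div_iff₀ hD] at h1
    rw [div_lt_iff₀ hD] at h2
    refine ⟨by nlinarith, ?_, by nlinarith⟩
    have ht' : (0:ℝ) < t ^ (Hj - 1 / 2) := Real.rpow_pos_of_pos ht _
    rw [le_div_iff₀ ht']
    nlinarith
  -- step 2 : slow variation, doubling bound
  obtain ⟨X, hX⟩ : ∃ X : ℝ, ∀ x ≥ X, ℓ (2 * x) / ℓ x < 2 ^ ε := by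
    have h1 : (1:ℝ) < 2 ^ ε := Real.one_lt_rpow_iff_of_pos (by norm_num) |>.2 (Or.inl ⟨by norm_num, hε⟩)
    have := (hℓsv.2 2 (by norm_num)).eventually_lt_const h1
    exact eventually_atTop.1 this
  set X' : ℝ := max X 1 with hX'def
  have hX'pos : (0:ℝ) < X' := lt_of_lt_of_le one_pos (le_max_right _ _)
  have hdouble : ∀ x ≥ X', ℓ (2 * x) ≤ 2 ^ ε * ℓ x := by
    intro x hx
    have hxpos : 0 < x := lt_of_lt_of_le hX'pos hx
    have := hX x (le_trans (le_max_left _ _) hx)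
    rw [div_lt_iff₀ (hℓpos _ hxpos)] at this
    linarith
  -- T
  set T : ℝ := min (t₁ / 2) (min (1 / X') (min (δ / 2) 1)) with hTdef
  have hT0 : 0 < T := by
    refine lt_min (by linarith) (lt_min (by positivity) (lt_min (by linarith) one_pos))
  have hT1 : T ≤ 1 := le_trans (min_le_right _ _) (le_trans (min_le_right _ _) (min_le_right _ _))
  have hTδ : 2 * T ≤ δ := by
    have h1 : T ≤ δ / 2 :=
      le_trans (min_le_right _ _) (le_trans (min_le_right _ _) (min_le_left _ _))
    linarith
  have hTt₁ : T < t₁ := lt_of_le_of_lt (min_le_left _ _) (by linarith)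
  have hTX : T ≤ 1 / X' := le_trans (min_le_right _ _) (min_le_left _ _)
  -- step 4 : bound on [T/2, T]
  obtain ⟨M, hM⟩ : ∃ M, ∀ s ∈ Icc (T/2) T, |2 * k s / s ^ (Hj - 1 / 2)| ≤ M := by
    have hsub : Icc (T/2) T ⊆ Ioi (0:ℝ) := fun s hs => lt_of_lt_of_le (by linarith) hs.1
    have hcont : ContinuousOn (fun s => 2 * k s / s ^ (Hj - 1 / 2)) (Icc (T/2) T) := by
      apply ContinuousOn.div
      · exact continuousOn_const.mul ((hk.continuousOn).mono hsub)
      · intro s hs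
        exact (Real.continuousAt_rpow_const s _ (Or.inl (ne_of_gt (hsub hs)))).continuousWithinAt
      · intro s hs
        exact ne_of_gt (Real.rpow_pos_of_pos (hsub hs) _)
    obtain ⟨M, hM⟩ := isCompact_Icc.exists_bound_of_continuousOn hcont
    exact ⟨M, fun s hs => by rw [← Real.norm_eq_abs]; exact hM s hs⟩
  have hM0 : 0 ≤ M := le_trans (abs_nonneg _) (hM T ⟨by linarith, le_refl T⟩)
  have hℓM : ∀ s, T/2 < s → s ≤ T → ℓ (1/s) ≤ M := by
    intro s hs1 hs2
    have hs0 : 0 < s := lt_trans (by linarith) hs1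
    have h := (hratio s hs0 (lt_of_le_of_lt hs2 hTt₁)).2.1
    exact le_trans h (le_trans (le_abs_self _) (hM s ⟨le_of_lt hs1, hs2⟩))
  -- step 5 : dyadic induction
  have hind : ∀ n : ℕ, ∀ t : ℝ, 0 < t → 2 ^ n * t ≤ T →
      ℓ (1/t) ≤ 2 ^ (ε * n) * ℓ (1 / (2 ^ n * t)) := by
    intro n
    induction n with
    | zero => intro t ht h; simp
    | succ n ih =>
      intro t ht h
      push_cast
      have h2t : (0:ℝ) < 2 * t := by linarith
      have hpow : (2:ℝ) ^ n * (2 * t) = 2 ^ (n+1) * t := by ring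
      have hih := ih (2 * t) h2t (by rw [hpow]; exact h)
      have hstep : ℓ (1/t) ≤ 2 ^ ε * ℓ (1 / (2 * t)) := by
        have hx : 1 / (2 * t) ≥ X' := by
          have hle : 2 * t ≤ 1 / X' := by
            calc 2 * t ≤ 2 ^ (n+1) * t := by
                  have : (2:ℝ) ≤ 2 ^ (n+1) := by
                    calc (2:ℝ) = 2 ^ 1 := by norm_num
                    _ ≤ 2 ^ (n+1) := by
                      apply pow_le_pow_right₀ (by norm_num); omega
                  nlinarith
            _ ≤ T := h
            _ ≤ 1 / X' := hTX
          rw [ge_iff_le, le_div_iff₀ h2t]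
          have h1 : X' * (2 * t) ≤ X' * (1 / X') := mul_le_mul_of_nonneg_left hle (le_of_lt hX'pos)
          have h2 : X' * (1 / X') = 1 := by field_simp
          linarith
        have := hdouble _ hx
        have h1t : 2 * (1 / (2 * t)) = 1 / t := by field_simp
        rwa [h1t] at this
      calc ℓ (1/t) ≤ 2 ^ ε * ℓ (1 / (2 * t)) := hstep
        _ ≤ 2 ^ ε * (2 ^ (ε * n) * ℓ (1 / (2 ^ n * (2 * t)))) := by
            apply mul_le_mul_of_nonneg_left hih (le_of_lt (Real.rpow_pos_of_pos two_pos ε))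
        _ = 2 ^ (ε * ((n:ℝ)+1)) * ℓ (1 / (2 ^ (n+1) * t)) := by
            rw [hpow, ← mul_assoc, ← Real.rpow_add two_pos]
            ring_nf
  -- step 6 : conclusion
  refine ⟨T, hT0, hT1, hTδ, 3/2 * M * T ^ ε, by positivity, fun t ht => ?_⟩
  obtain ⟨ht0, htT⟩ := ht
  have hkt : 0 < k t := (hratio t ht0 (lt_of_le_of_lt htT hTt₁)).1
  refine ⟨hkt, ?_⟩
  -- find n with T/2 < 2^n t ≤ T
  have hex : ∃ n : ℕ, T / 2 < 2 ^ n * t := by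
    obtain ⟨n, hn⟩ := pow_unbounded_of_one_lt (T / (2 * t)) (one_lt_two (α := ℝ))
    have h2 : T < 2 ^ n * (2 * t) := by
      rw [div_lt_iff₀ (by positivity : (0:ℝ) < 2 * t)] at hn; linarith
    exact ⟨n, by nlinarith⟩
  classical
  obtain ⟨n, hn1, hn2⟩ : ∃ n : ℕ, T / 2 < 2 ^ n * t ∧ 2 ^ n * t ≤ T := by
    refine ⟨Nat.find hex, Nat.find_spec hex, ?_⟩
    cases h : Nat.find hex with
    | zero => simpa using htT
    | succ m =>
      have hmin := Nat.find_min hex (by omega : m < Nat.find hex)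
      push_neg at hmin
      calc (2:ℝ) ^ (m+1) * t = 2 * (2 ^ m * t) := by ring
        _ ≤ 2 * (T / 2) := by linarith
        _ = T := by ring
  have hℓt : ℓ (1/t) ≤ 2 ^ (ε * n) * M := by
    have h1 := hind n t ht0 hn2
    have h2 := hℓM (2 ^ n * t) hn1 hn2
    calc ℓ (1/t) ≤ 2 ^ (ε * n) * ℓ (1 / (2 ^ n * t)) := h1
      _ ≤ 2 ^ (ε * n) * M := by
          apply mul_le_mul_of_nonneg_left h2 (le_of_lt (Real.rpow_pos_of_pos two_pos _))
  have hpown : (2:ℝ) ^ (ε * n) ≤ (T / t) ^ ε := by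
    have h2n : (2:ℝ) ^ n ≤ T / t := by rw [le_div_iff₀ ht0]; exact hn2
    calc (2:ℝ) ^ (ε * n) = (2:ℝ) ^ ((n:ℝ) * ε) := by rw [mul_comm]
      _ = ((2:ℝ) ^ (n:ℝ)) ^ ε := Real.rpow_mul (by norm_num) _ _
      _ = ((2:ℝ) ^ n) ^ ε := by rw [Real.rpow_natCast]
      _ ≤ (T / t) ^ ε := Real.rpow_le_rpow (by positivity) h2n (le_of_lt hε)
  have hTt : (T / t) ^ ε = T ^ ε * t ^ (-ε) := by
    rw [Real.div_rpow (le_of_lt hT0) (le_of_lt ht0), Real.rpow_neg (le_of_lt ht0), div_eq_mul_inv]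
  have hℓt2 : ℓ (1/t) ≤ M * T ^ ε * t ^ (-ε) := by
    calc ℓ (1/t) ≤ 2 ^ (ε * n) * M := hℓt
      _ ≤ (T / t) ^ ε * M := mul_le_mul_of_nonneg_right hpown hM0
      _ = M * T ^ ε * t ^ (-ε) := by rw [hTt]; ring
  have hk3 := (hratio t ht0 (lt_of_le_of_lt htT hTt₁)).2.2
  have htp : (0:ℝ) < t ^ (Hj - 1 / 2) := Real.rpow_pos_of_pos ht0 _
  calc k t ≤ 3/2 * (t ^ (Hj - 1 / 2) * ℓ (1/t)) := hk3
    _ ≤ 3/2 * (t ^ (Hj - 1 / 2) * (M * T ^ ε * t ^ (-ε))) := by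
        apply mul_le_mul_of_nonneg_left _ (by norm_num)
        exact mul_le_mul_of_nonneg_left hℓt2 (le_of_lt htp)
    _ = 3/2 * M * T ^ ε * (t ^ (Hj - 1 / 2) * t ^ (-ε)) := by ring
    _ = 3/2 * M * T ^ ε * t ^ (Hj - 1 / 2 - ε) := by
        rw [← Real.rpow_add ht0]
        ring_nf

lemma boundB (k : ℝ → ℝ) (p δ T A : ℝ) (hT : 0 < T) (h2T : 2 * T ≤ δ)
    (hk : ContDiffOn ℝ 1 k (Ioi 0))
    (hmono : MonotoneOn (deriv k) (Ioc 0 δ) ∨ AntitoneOn (deriv k) (Ioc 0 δ))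
    (hA : 0 ≤ A) (hbk : ∀ t ∈ Ioc (0:ℝ) T, 0 < k t ∧ k t ≤ A * t ^ p) :
    ∀ t ∈ Ioc (0:ℝ) (T/2), |deriv k t| ≤ (2 * A * 2 ^ |p|) * t ^ (p - 1) := by
  have hcd : ContinuousOn (deriv k) (Ioi 0) :=
    hk.continuousOn_deriv_of_isOpen isOpen_Ioi le_rfl
  have hdiff : ∀ x : ℝ, 0 < x → HasDerivAt k (deriv k x) x := fun x hx =>
    ((hk.differentiableOn one_ne_zero).differentiableAt (Ioi_mem_nhds hx)).hasDerivAt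
  have hInt : ∀ a b : ℝ, 0 < a → a ≤ b → IntervalIntegrable (deriv k) volume a b := by
    intro a b ha hab
    refine (hcd.mono ?_).intervalIntegrable
    rw [uIcc_of_le hab]; exact fun x hx => lt_of_lt_of_le ha hx.1
  have ftc : ∀ a b : ℝ, 0 < a → a ≤ b → ∫ s in a..b, deriv k s = k b - k a := by
    intro a b ha hab
    exact integral_deriv_eq_sub
      (fun x hx => (hdiff x (by rw [uIcc_of_le hab] at hx; exact lt_of_lt_of_le ha hx.1)).differentiableAt)
      (hInt a b ha hab)
  have cmp_le : ∀ a b c : ℝ, 0 < a → a ≤ b → (∀ x ∈ Icc a b, c ≤ deriv k x) →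
      (b - a) * c ≤ k b - k a := by
    intro a b c ha hab hc
    rw [← ftc a b ha hab]
    have := integral_mono_on hab intervalIntegrable_const (hInt a b ha hab) hc
    simpa [smul_eq_mul] using this
  have cmp_ge : ∀ a b c : ℝ, 0 < a → a ≤ b → (∀ x ∈ Icc a b, deriv k x ≤ c) →
      k b - k a ≤ (b - a) * c := by
    intro a b c ha hab hc
    rw [← ftc a b ha hab]
    have := integral_mono_on hab (hInt a b ha hab) intervalIntegrable_const hc
    simpa [smul_eq_mul] using this
  intro t ht
  obtain ⟨ht0, htT2⟩ := ht
  have h2t : 2 * t ≤ T := by linarith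
  have m1 : t ∈ Ioc (0:ℝ) δ := ⟨ht0, by linarith⟩
  have m2 : 2 * t ∈ Ioc (0:ℝ) δ := ⟨by linarith, by linarith⟩
  have m3 : t/2 ∈ Ioc (0:ℝ) δ := ⟨by linarith, by linarith⟩
  have b1 := hbk t ⟨ht0, by linarith⟩
  have b2 := hbk (2*t) ⟨by linarith, by linarith⟩
  have b3 := hbk (t/2) ⟨by linarith, by linarith⟩
  have htp : (0:ℝ) < t ^ p := Real.rpow_pos_of_pos ht0 _
  have hq : (0:ℝ) < 2 ^ |p| := Real.rpow_pos_of_pos two_pos _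
  have h2p : (2:ℝ)^p ≤ 2^|p| := Real.rpow_le_rpow_of_exponent_le one_le_two (le_abs_self p)
  have h2pneg : (2:ℝ)^(-p) ≤ 2^|p| := Real.rpow_le_rpow_of_exponent_le one_le_two (neg_le_abs p)
  have hb2 : A * (2*t)^p ≤ A * 2^|p| * t^p := by
    rw [Real.mul_rpow (by norm_num) (le_of_lt ht0)]
    nlinarith [mul_le_mul_of_nonneg_left h2p hA, htp.le,
      mul_le_mul_of_nonneg_right (mul_le_mul_of_nonneg_left h2p hA) htp.le]
  have hb3 : A * (t/2)^p ≤ A * 2^|p| * t^p := by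
    have e : (t/2:ℝ)^p = t^p * 2^(-p) := by
      rw [Real.div_rpow (le_of_lt ht0) (by norm_num), Real.rpow_neg (by norm_num : (0:ℝ) ≤ 2),
        div_eq_mul_inv]
    rw [e]
    nlinarith [mul_le_mul_of_nonneg_right (mul_le_mul_of_nonneg_left h2pneg hA) htp.le]
  have hb1 : A * t^p ≤ A * 2^|p| * t^p := by
    have h1 : (1:ℝ) ≤ 2^|p| := by
      have := Real.rpow_le_rpow_of_exponent_le one_le_two (abs_nonneg p)
      simpa using this
    nlinarith [mul_nonneg hA htp.le]
  set C := 2 * A * 2^|p| with hC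
  have hpow : t * (C * t^(p-1)) = C * t^p := by
    rw [Real.rpow_sub ht0, Real.rpow_one]; field_simp
  have hup : ∀ y : ℝ, t * y ≤ C * t ^ p → y ≤ C * t^(p-1) := by
    intro y hy
    exact le_of_mul_le_mul_left (hy.trans_eq hpow.symm) ht0
  have hlo : ∀ y : ℝ, -(C * t ^ p) ≤ t * y → -(C * t^(p-1)) ≤ y := by
    intro y hy
    have h2 : t * (-(C * t^(p-1))) = -(C * t^p) := by rw [mul_neg, hpow]
    exact le_of_mul_le_mul_left (h2.trans_le hy) ht0
  have hCt : A * 2^|p| * t^p = C * t^p / 2 := by rw [hC]; ring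
  rcases hmono with hm | hm
  · -- monotone
    have e1 : t * deriv k t ≤ k (2*t) - k t := by
      have := cmp_le t (2*t) (deriv k t) ht0 (by linarith)
        (fun x hx => hm m1 ⟨lt_of_lt_of_le ht0 hx.1, le_trans hx.2 m2.2⟩ hx.1)
      rw [show 2*t - t = t by ring] at this; exact this
    have e2 : k t - k (t/2) ≤ (t/2) * deriv k t := by
      have := cmp_ge (t/2) t (deriv k t) (by linarith) (by linarith)
        (fun x hx => hm ⟨lt_of_lt_of_le m3.1 hx.1, le_trans hx.2 m1.2⟩ m1 hx.2)
      rw [show t - t/2 = t/2 by ring] at this; exact this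
    refine abs_le.2 ⟨?_, ?_⟩
    · apply hlo
      have h3 : -(A * (t/2)^p) ≤ (t/2) * deriv k t := by linarith [b1.1, b3.2]
      linarith [hb3, hCt]
    · apply hup
      calc t * deriv k t ≤ k (2*t) - k t := e1
        _ ≤ A * (2*t)^p := by linarith [b1.1, b2.2]
        _ ≤ A * 2^|p| * t^p := hb2
        _ ≤ C * t^p := by nlinarith [mul_nonneg (mul_nonneg hA hq.le) htp.le]
  · -- antitone
    have e1 : k (2*t) - k t ≤ t * deriv k t := by
      have := cmp_ge t (2*t) (deriv k t) ht0 (by linarith)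
        (fun x hx => hm m1 ⟨lt_of_lt_of_le ht0 hx.1, le_trans hx.2 m2.2⟩ hx.1)
      rw [show 2*t - t = t by ring] at this; exact this
    have e2 : (t/2) * deriv k t ≤ k t - k (t/2) := by
      have := cmp_le (t/2) t (deriv k t) (by linarith) (by linarith)
        (fun x hx => hm ⟨lt_of_lt_of_le m3.1 hx.1, le_trans hx.2 m1.2⟩ m1 hx.2)
      rw [show t - t/2 = t/2 by ring] at this; exact this
    refine abs_le.2 ⟨?_, ?_⟩
    · apply hlo
      have h3 : -(A * t^p) ≤ t * deriv k t := by linarith [b2.1, b1.2]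
      linarith [hb1, hCt]
    · apply hup
      have h4 : (t/2) * deriv k t ≤ A * t^p := by linarith [b3.1, b1.2]
      linarith [hb1, hCt]

lemma keyJ (k : ℝ → ℝ) (Hj : ℝ) (ℓ : ℝ → ℝ)
    (hk : ContDiffOn ℝ 1 k (Ioi 0))
    (hmono : ∃ δ > 0, MonotoneOn (deriv k) (Ioc 0 δ) ∨ AntitoneOn (deriv k) (Ioc 0 δ))
    (hℓpos : ∀ x : ℝ, 0 < x → 0 < ℓ x) (hℓsv : SlowlyVarying ℓ)
    (hreg : Tendsto (fun t => k t / (t ^ (Hj - 1 / 2) * ℓ (1 / t)))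
      (nhdsWithin 0 (Ioi 0)) (nhds 1))
    (η ε : ℝ) (hε : 0 < ε) (hexp : -1 < 2 * Hj - 3 - 2 * ε + η) :
    IntegrableOn (fun t => (deriv k t) ^ 2 * t ^ η) (Ioc (0:ℝ) 1) := by
  obtain ⟨δ, hδ, hm⟩ := hmono
  obtain ⟨T, hT0, hT1, hTδ, A, hA, hbk⟩ := boundA k Hj ℓ δ hδ hk hℓpos hℓsv hreg ε hε
  set p := Hj - 1/2 - ε with hp
  have hder := boundB k p δ T A hT0 hTδ hk hm hA hbk
  set C := 2*A*2^|p| with hCdef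
  have hcd : ContinuousOn (deriv k) (Ioi 0) :=
    hk.continuousOn_deriv_of_isOpen isOpen_Ioi le_rfl
  have hcontf : ContinuousOn (fun t => (deriv k t)^2 * t^η) (Ioi 0) := by
    apply ContinuousOn.mul
    · exact hcd.pow 2
    · intro s hs
      exact (Real.continuousAt_rpow_const s η (Or.inl (ne_of_gt hs))).continuousWithinAt
  have part1 : IntegrableOn (fun t => (deriv k t)^2 * t^η) (Ioc 0 (T/2)) := by
    have hmeas : AEStronglyMeasurable (fun t => (deriv k t)^2 * t^η)
        (volume.restrict (Ioc 0 (T/2))) :=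
      (hcontf.mono (fun x hx => hx.1)).aestronglyMeasurable measurableSet_Ioc
    have hg : IntegrableOn (fun t => C^2 * t^(2*p - 2 + η)) (Ioc 0 (T/2)) := by
      have h1 : IntervalIntegrable (fun t => t^(2*p-2+η)) volume 0 (T/2) :=
        intervalIntegrable_rpow' (by simp only [hp]; linarith)
      exact ((intervalIntegrable_iff_integrableOn_Ioc_of_le
        (by linarith : (0:ℝ) ≤ T/2)).1 h1).const_mul _
    refine Integrable.mono hg hmeas ?_
    rw [ae_restrict_iff' measurableSet_Ioc]
    refine ae_of_all _ (fun t ht => ?_)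
    obtain ⟨ht0, htT⟩ := ht
    have hb := hder t ⟨ht0, htT⟩
    have htη : (0:ℝ) ≤ t^η := (Real.rpow_pos_of_pos ht0 η).le
    rw [Real.norm_eq_abs, Real.norm_eq_abs,
      abs_of_nonneg (mul_nonneg (sq_nonneg _) htη),
      abs_of_nonneg (mul_nonneg (sq_nonneg _) (Real.rpow_pos_of_pos ht0 _).le)]
    have h1 : (deriv k t)^2 ≤ (C * t^(p-1))^2 := by
      rw [← sq_abs (deriv k t)]
      exact pow_le_pow_left₀ (abs_nonneg _) hb 2
    calc (deriv k t)^2 * t^η ≤ (C*t^(p-1))^2 * t^η := mul_le_mul_of_nonneg_right h1 htη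
      _ = C^2 * t^(2*p-2+η) := by
          rw [mul_pow, sq (t ^ (p-1)), ← Real.rpow_add ht0, mul_assoc, ← Real.rpow_add ht0]
          congr 1
          ring
  have part2 : IntegrableOn (fun t => (deriv k t)^2 * t^η) (Ioc (T/2) 1) := by
    have hsub : Icc (T/2) 1 ⊆ Ioi (0:ℝ) := fun x hx => lt_of_lt_of_le (by linarith) hx.1
    exact ((hcontf.mono hsub).integrableOn_compact isCompact_Icc).mono_set Ioc_subset_Icc_self
  apply (part1.union part2).mono_set
  rw [Ioc_union_Ioc_eq_Ioc (by linarith : (0:ℝ) ≤ T/2) (by linarith : T/2 ≤ 1)]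

theorem stmt8 (d : ℕ) (k : Fin (d + 1) → ℝ → ℝ) (H : Fin (d + 1) → ℝ)
    (ℓ : Fin (d + 1) → ℝ → ℝ)
    (hH : ∀ j, H j ∈ Ioo (0 : ℝ) 1)
    (hk : ∀ j, ContDiffOn ℝ 1 (k j) (Ioi 0))
    (hmono : ∀ j, ∃ δ > 0,
      MonotoneOn (deriv (k j)) (Ioc 0 δ) ∨ AntitoneOn (deriv (k j)) (Ioc 0 δ))
    (hℓpos : ∀ j, ∀ x : ℝ, 0 < x → 0 < ℓ j x)
    (hℓsv : ∀ j, SlowlyVarying (ℓ j))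
    (hreg : ∀ j, Tendsto (fun t => k j t / (t ^ (H j - 1 / 2) * ℓ j (1 / t)))
      (nhdsWithin 0 (Ioi 0)) (nhds 1)) :
    ∀ η : ℝ, 2 - 2 * Finset.univ.inf' Finset.univ_nonempty H < η →
      IntegrableOn
        (fun t => (opNorm (Matrix.diagonal fun j => deriv (k j) t)) ^ 2 * t ^ η)
        (Ioc (0 : ℝ) 1) := by
  intro η hη
  set Hmin := Finset.univ.inf' Finset.univ_nonempty H with hHmin
  have hHminle : ∀ j, Hmin ≤ H j := fun j => Finset.inf'_le _ (Finset.mem_univ j)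
  set ε := (η - (2 - 2*Hmin))/4 with hεdef
  have hε0 : 0 < ε := by rw [hεdef]; linarith
  have hInt : ∀ j, IntegrableOn (fun t => (deriv (k j) t)^2 * t^η) (Ioc (0:ℝ) 1) := fun j =>
    keyJ (k j) (H j) (ℓ j) (hk j) (hmono j) (hℓpos j) (hℓsv j) (hreg j) η ε hε0
      (by have := hHminle j; rw [hεdef]; linarith)
  have hsum : IntegrableOn (fun t => ∑ j, (deriv (k j) t)^2 * t^η) (Ioc (0:ℝ) 1) :=
    integrable_finset_sum _ (fun j _ => hInt j)
  have hF : (fun t => (opNorm (Matrix.diagonal fun j => deriv (k j) t))^2 * t^η)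
      = fun t => (Finset.univ.sup' Finset.univ_nonempty
          (fun j => |deriv (k j) t|))^2 * t^η := by
    funext t; rw [opNorm_diagonal]
  rw [hF]
  have hcd : ∀ j, ContinuousOn (deriv (k j)) (Ioi (0:ℝ)) := fun j =>
    (hk j).continuousOn_deriv_of_isOpen isOpen_Ioi le_rfl
  have hcont : ContinuousOn (fun t => (Finset.univ.sup' Finset.univ_nonempty
      (fun j => |deriv (k j) t|))^2 * t^η) (Ioi 0) := by
    apply ContinuousOn.mul
    · exact (ContinuousOn.finset_sup'_apply Finset.univ_nonempty
        (fun j _ => (hcd j).abs)).pow 2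
    · intro s hs
      exact (Real.continuousAt_rpow_const s η (Or.inl (ne_of_gt hs))).continuousWithinAt
  have hmeas : AEStronglyMeasurable (fun t => (Finset.univ.sup' Finset.univ_nonempty
      (fun j => |deriv (k j) t|))^2 * t^η) (volume.restrict (Ioc (0:ℝ) 1)) :=
    (hcont.mono (fun x (hx : x ∈ Ioc (0:ℝ) 1) => hx.1)).aestronglyMeasurable measurableSet_Ioc
  refine Integrable.mono hsum hmeas ?_
  rw [ae_restrict_iff' measurableSet_Ioc]
  refine ae_of_all _ (fun t ht => ?_)
  have ht0 := ht.1
  have htη : (0:ℝ) ≤ t^η := (Real.rpow_pos_of_pos ht0 η).le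
  have hsup_sq : (Finset.univ.sup' Finset.univ_nonempty (fun j => |deriv (k j) t|))^2
      ≤ ∑ j, (deriv (k j) t)^2 := by
    obtain ⟨j, hj, hjeq⟩ := Finset.exists_mem_eq_sup' Finset.univ_nonempty
      (fun j => |deriv (k j) t|)
    rw [hjeq, sq_abs]
    exact Finset.single_le_sum (fun i _ => sq_nonneg (deriv (k i) t)) (Finset.mem_univ j)
  rw [Real.norm_eq_abs, Real.norm_eq_abs,
    abs_of_nonneg (mul_nonneg (sq_nonneg _) htη),
    abs_of_nonneg (Finset.sum_nonneg (fun i _ => mul_nonneg (sq_nonneg _) htη))]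
  calc (Finset.univ.sup' Finset.univ_nonempty (fun j => |deriv (k j) t|))^2 * t^η
      ≤ (∑ j, (deriv (k j) t)^2) * t^η := mul_le_mul_of_nonneg_right hsup_sq htη
    _ = ∑ j, (deriv (k j) t)^2 * t^η := Finset.sum_mul _ _ _
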